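/- arXiv:2308.10138 — 2 statements merged into one kernel-verified Lean document; each statement's English description precedes it below -/
import Mathlib

section
/- Let Z_k = (E_1 + ⋯ + E_k)^{-1/α} where E_1, E_2, … are i.i.d. standard exponential random variables and α ∈ (0,2). Then the series ∑_{k=1}^∞ Z_k² converges almost surely to a finite, strictly positive random variable. -/
open Filter MeasureTheory ProbabilityTheory

open scoped ENNReal Topology

lemma expMeasure_one_Iic_zero : expMeasure 1 (Set.Iic 0) = 0 := by
  show MeasureTheory.volume.withDensity (gammaPDF 1 1) (Set.Iic 0) = 0
  rw [withDensity_apply _ measurableSet_Iic,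
    setLIntegral_congr (MeasureTheory.Iio_ae_eq_Iic (a := (0:ℝ))).symm]
  exact lintegral_gammaPDF_of_nonpos le_rfl

lemma integrable_id_expMeasure_one : Integrable id (expMeasure 1) := by
  show Integrable id (MeasureTheory.volume.withDensity (gammaPDF 1 1))
  have hm : Measurable (gammaPDF 1 1) := (measurable_gammaPDFReal 1 1).ennreal_ofReal
  rw [integrable_withDensity_iff hm
    (Filter.Eventually.of_forall fun x => ENNReal.ofReal_lt_top)]
  have hpdf : ∀ x : ℝ, (gammaPDF 1 1 x).toReal = gammaPDFReal 1 1 x := fun x =>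
    ENNReal.toReal_ofReal (gammaPDFReal_nonneg zero_lt_one zero_lt_one x)
  have heq : (fun x : ℝ => id x * (gammaPDF 1 1 x).toReal)
      = Set.indicator (Set.Ici 0) (fun x => x * Real.exp (-x)) := by
    funext x
    rw [hpdf, gammaPDFReal]
    by_cases hx : (0:ℝ) ≤ x <;>
      simp [hx, Set.indicator_apply, Real.Gamma_one, mul_comm]
  rw [heq, integrable_indicator_iff measurableSet_Ici]
  have h2 := Real.GammaIntegral_convergent (s := 2) (by norm_num)
  have h2' : IntegrableOn (fun x : ℝ => x * Real.exp (-x)) (Set.Ioi 0) := by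
    refine h2.congr_fun (fun x hx => ?_) measurableSet_Ioi
    rw [show (2:ℝ) - 1 = 1 by norm_num]; beta_reduce; rw [Real.rpow_one, mul_comm]
  exact h2'.congr_set_ae MeasureTheory.Ioi_ae_eq_Ici.symm

/-- With `Z_k = (E_1 + ⋯ + E_{k+1})^{-1/α}` for i.i.d. standard exponentials `E_j` and
`α ∈ (0,2)`, the series `∑_k Z_k²` converges almost surely to a finite strictly positive limit. -/
theorem sum_sq_Zk_summable_pos
    {Ω : Type*} [MeasureSpace Ω] [IsProbabilityMeasure (ℙ : Measure Ω)]
    (E : ℕ → Ω → ℝ) (hmeas : ∀ k, Measurable (E k))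
    (hindep : iIndepFun E ℙ)
    (hdist : ∀ k, Measure.map (E k) ℙ = expMeasure 1)
    (α : ℝ) (hα0 : 0 < α) (hα2 : α < 2)
    (Z : ℕ → Ω → ℝ)
    (hZ : ∀ k ω, Z k ω = (∑ j ∈ Finset.range (k + 1), E j ω) ^ (-1 / α)) :
    ∀ᵐ ω ∂(ℙ : Measure Ω),
      Summable (fun k => (Z k ω) ^ 2) ∧ 0 < ∑' k, (Z k ω) ^ 2 := by
  -- almost surely all E j are positive
  have hposj : ∀ j, ∀ᵐ ω ∂(ℙ : Measure Ω), 0 < E j ω := by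
    intro j
    rw [ae_iff]
    have hset : {ω | ¬ 0 < E j ω} = E j ⁻¹' (Set.Iic 0) := by
      ext ω; simp [not_lt]
    rw [hset, ← Measure.map_apply (hmeas j) measurableSet_Iic, hdist j]
    exact expMeasure_one_Iic_zero
  have hall : ∀ᵐ ω ∂(ℙ : Measure Ω), ∀ j, 0 < E j ω := ae_all_iff.2 hposj
  -- integrability of E 0
  have hint : Integrable (E 0) ℙ := by
    have hmap : Integrable id (Measure.map (E 0) ℙ) := by
      rw [hdist 0]; exact integrable_id_expMeasure_one
    have := (integrable_map_measure hmap.aestronglyMeasurable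
      (hmeas 0).aemeasurable).1 hmap
    simpa [Function.comp] using this
  -- strong law of large numbers
  set L : ℝ := ∫ ω, E 0 ω ∂(ℙ : Measure Ω) with hLdef
  have hident : ∀ i, IdentDistrib (E i) (E 0) ℙ ℙ := fun i =>
    ⟨(hmeas i).aemeasurable, (hmeas 0).aemeasurable, by rw [hdist i, hdist 0]⟩
  have hSLLN := strong_law_ae_real E hint (fun i j hij => hindep.indepFun hij) hident
  -- positivity of the mean
  have hnonneg_ae : 0 ≤ᵐ[(ℙ : Measure Ω)] E 0 :=
    (hposj 0).mono fun ω h => h.le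
  have hLpos : 0 < L := by
    rcases lt_or_eq_of_le (integral_nonneg_of_ae hnonneg_ae) with h | h
    · exact h
    exfalso
    have h0 : E 0 =ᵐ[(ℙ : Measure Ω)] 0 :=
      (integral_eq_zero_iff_of_nonneg_ae hnonneg_ae hint).1 h.symm
    have h1 : (ℙ : Measure Ω) {ω | ¬ E 0 ω = (0:ℝ)} = 0 := ae_iff.1 h0
    have hset : {ω | ¬ E 0 ω = (0:ℝ)} = E 0 ⁻¹' ({(0:ℝ)}ᶜ) := by ext ω; simp
    rw [hset, ← Measure.map_apply (hmeas 0) (measurableSet_singleton (0:ℝ)).compl,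
      hdist 0] at h1
    haveI := isProbabilityMeasure_expMeasure (r := 1) one_pos
    have hz : expMeasure 1 {(0:ℝ)} = 0 :=
      measure_mono_null (by intro x hx; simp_all) expMeasure_one_Iic_zero
    rw [measure_compl (measurableSet_singleton _) (by simp [hz]), hz] at h1
    simp at h1
  -- exponent facts
  set p : ℝ := -1 / α * 2 with hpdef
  have hp : p < -1 := by
    have h1 : (1:ℝ) < 2 / α := (one_lt_div hα0).2 hα2
    have : p = -(2 / α) := by rw [hpdef]; ring
    rw [this]; linarith
  -- summable comparison series
  have hg : Summable (fun k : ℕ => ((k:ℝ) + 1) ^ p) := by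
    have h0 : Summable (fun n : ℕ => (n:ℝ) ^ p) := Real.summable_nat_rpow.mpr hp
    have := (summable_nat_add_iff 1).mpr h0
    simpa using this
  filter_upwards [hall, hSLLN] with ω hpos htend
  set S : ℕ → ℝ := fun k => ∑ j ∈ Finset.range (k + 1), E j ω with hSdef
  have hSpos : ∀ k, 0 < S k :=
    fun k => Finset.sum_pos (fun j _ => hpos j) Finset.nonempty_range_add_one
  have hz2 : ∀ k, Z k ω ^ 2 = S k ^ p := by
    intro k
    rw [hZ k ω, hpdef, Real.rpow_mul (hSpos k).le]
    rw [show ((2:ℝ) : ℝ) = ((2:ℕ) : ℝ) by norm_num, Real.rpow_natCast]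
  -- eventual bound from SLLN
  have htend' : Tendsto (fun k : ℕ => S k / ((k:ℝ) + 1)) atTop (𝓝 L) := by
    have := htend.comp (tendsto_add_atTop_nat 1)
    refine this.congr fun k => ?_
    simp [hSdef, Function.comp]
  have hev : ∀ᶠ k in atTop, L / 2 ≤ S k / ((k:ℝ) + 1) :=
    htend'.eventually (eventually_ge_nhds (show L / 2 < L by linarith))
  have hbound : ∀ᶠ k in atTop, Z k ω ^ 2 ≤ (L / 2) ^ p * ((k:ℝ) + 1) ^ p := by
    filter_upwards [hev] with k hk
    have hk1 : (0:ℝ) < (k:ℝ) + 1 := by positivity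
    have hSk : L / 2 * ((k:ℝ) + 1) ≤ S k := by
      rw [div_le_div_iff₀ (by norm_num) hk1] at hk
      nlinarith
    have hLk : 0 < L / 2 * ((k:ℝ) + 1) := by positivity
    rw [hz2 k]
    calc S k ^ p ≤ (L / 2 * ((k:ℝ) + 1)) ^ p :=
          Real.rpow_le_rpow_of_nonpos hLk hSk (by linarith)
      _ = (L / 2) ^ p * ((k:ℝ) + 1) ^ p :=
          Real.mul_rpow (by positivity) hk1.le
  have hsum : Summable fun k => Z k ω ^ 2 := by
    refine summable_of_isBigO_nat (hg.mul_left ((L / 2) ^ p)) ?_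
    rw [Asymptotics.isBigO_iff]
    refine ⟨1, ?_⟩
    filter_upwards [hbound] with k hk
    rw [Real.norm_eq_abs, Real.norm_eq_abs, abs_of_nonneg (sq_nonneg _), one_mul,
      abs_of_nonneg (by positivity)]
    exact hk
  refine ⟨hsum, Summable.tsum_pos hsum (fun k => sq_nonneg _) 0 ?_⟩
  rw [hz2 0]
  exact Real.rpow_pos_of_pos (hSpos 0) p
end

section
/- Uniform integrability implies a uniform weak LLN for triangular arrays: Let (X_{n,g})_{g=1}^n be row-wise i.i.d. real random variables with E[X_{n,1}] = μ_n, and suppose lim_{λ→∞} sup_n E[|X_{n,1}| · 1{|X_{n,1}| > λ}] = 0. Then n^{-1} ∑_{g=1}^n X_{n,g} − μ_n → 0 in probability as n → ∞. -/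
open Filter MeasureTheory ProbabilityTheory

/-- Uniform integrability implies a weak law of large numbers for row-wise i.i.d.
triangular arrays. -/
theorem wlln_triangular_array_of_ui
    {Ω : Type*} [MeasureSpace Ω] [IsProbabilityMeasure (ℙ : Measure Ω)]
    (X : ℕ → ℕ → Ω → ℝ) (hmeas : ∀ n g, Measurable (X n g))
    (hindep : ∀ n, iIndepFun (X n) ℙ)
    (hident : ∀ n g, IdentDistrib (X n g) (X n 0) ℙ ℙ)
    (hint : ∀ n, Integrable (X n 0) ℙ)
    (μ : ℕ → ℝ) (hμ : ∀ n, μ n = ∫ ω, X n 0 ω ∂(ℙ : Measure Ω))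
    (hUI : ∀ ε : ℝ, 0 < ε → ∃ lam : ℝ, 0 < lam ∧ ∀ n,
      ∫ ω in {ω | lam < |X n 0 ω|}, |X n 0 ω| ∂(ℙ : Measure Ω) ≤ ε) :
    ∀ ε : ℝ, 0 < ε →
      Tendsto (fun n : ℕ =>
          ℙ {ω | ε < |(n : ℝ)⁻¹ * ∑ g ∈ Finset.range n, X n g ω - μ n|})
        atTop (nhds 0) := by
  intro ε hε
  rw [ENNReal.tendsto_atTop_zero]
  intro δ hδ
  -- pick a real threshold r with 0 < r and ofReal r ≤ δ
  obtain ⟨r, hr0', hr1, hr2⟩ := ENNReal.lt_iff_exists_real_btwn.mp hδ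
  have hr0 : 0 < r := ENNReal.ofReal_pos.mp hr1
  -- choose the truncation level
  set ε' : ℝ := min (ε / 6) (r * ε / 6) with hε'def
  have hε'pos : 0 < ε' := lt_min (by positivity) (by positivity)
  obtain ⟨lam, hlam, hI⟩ := hUI ε' hε'pos
  -- truncation map
  set φ : ℝ → ℝ := fun x => if |x| ≤ lam then x else 0 with hφdef
  have hφ : Measurable φ :=
    Measurable.ite (measurableSet_le (measurable_id.abs) measurable_const)
      measurable_id measurable_const
  set Y : ℕ → ℕ → Ω → ℝ := fun n g => φ ∘ X n g with hYdef
  have hYb : ∀ n g ω, |Y n g ω| ≤ lam := by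
    intro n g ω
    simp only [hYdef, hφdef, Function.comp_apply]
    split_ifs with h
    · exact h
    · simpa using hlam.le
  have hYmeas : ∀ n g, Measurable (Y n g) := fun n g => hφ.comp (hmeas n g)
  have hYmem : ∀ n g, MemLp (Y n g) 2 ℙ := by
    intro n g
    exact (memLp_top_of_bound (hYmeas n g).aestronglyMeasurable lam
      (ae_of_all _ fun ω => by simpa using hYb n g ω)).mono_exponent le_top
  have hYint : ∀ n g, Integrable (Y n g) ℙ := fun n g => (hYmem n g).integrable one_le_two
  have hXint : ∀ n g, Integrable (X n g) ℙ := fun n g =>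
    (hident n g).integrable_iff.mpr (hint n)
  set ν : ℕ → ℝ := fun n => ∫ ω, Y n 0 ω ∂(ℙ : Measure Ω) with hνdef
  set I : ℕ → ℝ := fun n => ∫ ω, |X n 0 ω - Y n 0 ω| ∂(ℙ : Measure Ω) with hIdef
  -- the truncation error integral
  have hIeq : ∀ n, I n = ∫ ω in {ω | lam < |X n 0 ω|}, |X n 0 ω| ∂(ℙ : Measure Ω) := by
    intro n
    have hSm : MeasurableSet {ω | lam < |X n 0 ω|} :=
      measurableSet_lt measurable_const (hmeas n 0).abs
    simp only [hIdef]
    rw [← integral_indicator hSm]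
    congr 1
    funext ω
    rw [Set.indicator_apply]
    split_ifs with h
    · simp only [Set.mem_setOf_eq] at h
      simp only [hYdef, hφdef, Function.comp_apply, if_neg (not_le.mpr h), sub_zero]
    · simp only [Set.mem_setOf_eq] at h
      simp only [hYdef, hφdef, Function.comp_apply, if_pos (not_lt.mp h), sub_self, abs_zero]
  have hIle : ∀ n, I n ≤ ε' := fun n => (hIeq n) ▸ hI n
  -- mean of truncated variable is close
  have hνμ : ∀ n, |μ n - ν n| ≤ I n := by
    intro n
    have : μ n - ν n = ∫ ω, (X n 0 ω - Y n 0 ω) ∂(ℙ : Measure Ω) := by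
      rw [hμ n, integral_sub (hXint n 0) (hYint n 0)]
    rw [this]
    simpa [Real.norm_eq_abs] using
      norm_integral_le_integral_norm (μ := (ℙ : Measure Ω)) (fun ω => X n 0 ω - Y n 0 ω)
  -- identically distributed truncations
  have hIdentY : ∀ n g, IdentDistrib (Y n g) (Y n 0) ℙ ℙ := fun n g =>
    (hident n g).comp hφ
  have hνg : ∀ n g, ∫ ω, Y n g ω ∂(ℙ : Measure Ω) = ν n := fun n g =>
    (hIdentY n g).integral_eq
  have hIg : ∀ n g, ∫ ω, |X n g ω - Y n g ω| ∂(ℙ : Measure Ω) = I n := by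
    intro n g
    have hψ : Measurable fun x : ℝ => |x - φ x| := (measurable_id.sub hφ).abs
    exact ((hident n g).comp hψ).integral_eq
  -- variance bound for the truncation
  have hVarY : ∀ n, variance (Y n 0) ℙ ≤ lam ^ 2 := by
    intro n
    refine (variance_le_expectation_sq (hYmeas n 0).aestronglyMeasurable).trans ?_
    have h1 : ∫ ω, (Y n 0 ω) ^ 2 ∂(ℙ : Measure Ω) ≤ ∫ _ω, lam ^ 2 ∂(ℙ : Measure Ω) := by
      refine integral_mono ((hYmem n 0).integrable_sq) (integrable_const _) ?_
      intro ω
      have := hYb n 0 ω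
      calc (Y n 0 ω) ^ 2 = |Y n 0 ω| ^ 2 := (sq_abs _).symm
        _ ≤ lam ^ 2 := by nlinarith [abs_nonneg (Y n 0 ω)]
    calc (∫ ω, ((Y n 0) ^ 2) ω ∂(ℙ : Measure Ω)) = ∫ ω, (Y n 0 ω) ^ 2 ∂(ℙ : Measure Ω) := rfl
      _ ≤ ∫ _ω, lam ^ 2 ∂(ℙ : Measure Ω) := h1
      _ = lam ^ 2 := by simp
  -- independence of truncations
  have hYindep : ∀ n, iIndepFun (Y n) ℙ := fun n =>
    (hindep n).comp (fun _ => φ) (fun _ => hφ)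
  -- now the main estimate; choose N
  obtain ⟨N₀, hN₀⟩ := exists_nat_ge (18 * lam ^ 2 / (r * ε ^ 2))
  refine ⟨max 1 N₀, fun n hn => ?_⟩
  have hn1 : 1 ≤ n := le_trans (le_max_left _ _) hn
  have hnpos : (0 : ℝ) < n := by exact_mod_cast hn1
  have hnN₀ : (18 * lam ^ 2 / (r * ε ^ 2)) ≤ n := by
    refine hN₀.trans ?_
    exact_mod_cast le_trans (le_max_right _ _) hn
  -- variance of the sum
  have hVarSum : variance (∑ g ∈ Finset.range n, Y n g) ℙ ≤ n * lam ^ 2 := by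
    rw [IndepFun.variance_sum (fun g _ => hYmem n g)
      (fun i _ j _ hij => (hYindep n).indepFun hij)]
    calc (∑ g ∈ Finset.range n, variance (Y n g) ℙ)
        = ∑ _g ∈ Finset.range n, variance (Y n 0) ℙ := by
          exact Finset.sum_congr rfl fun g _ => (hIdentY n g).variance_eq
      _ = n * variance (Y n 0) ℙ := by
          rw [Finset.sum_const, Finset.card_range, nsmul_eq_mul]
      _ ≤ n * lam ^ 2 := by
          exact mul_le_mul_of_nonneg_left (hVarY n) (by positivity)
  -- mean of the sum
  have hES : (∫ ω, ∑ g ∈ Finset.range n, Y n g ω ∂(ℙ : Measure Ω)) = n * ν n := by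
    rw [integral_finset_sum _ (fun g _ => hYint n g)]
    rw [Finset.sum_congr rfl fun g _ => hνg n g, Finset.sum_const, Finset.card_range,
      nsmul_eq_mul]
  have hc : (0 : ℝ) < n * ε / 3 := by positivity
  -- Chebyshev bound
  have hCheb : ℙ {ω | n * ε / 3 ≤ |∑ g ∈ Finset.range n, Y n g ω - n * ν n|}
      ≤ ENNReal.ofReal (r / 2) := by
    have hmem : MemLp (∑ g ∈ Finset.range n, Y n g) 2 ℙ :=
      memLp_finset_sum' _ (fun g _ => hYmem n g)
    have h := meas_ge_le_variance_div_sq (μ := ℙ) hmem hc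
    have hset : {ω | n * ε / 3 ≤ |∑ g ∈ Finset.range n, Y n g ω - n * ν n|}
        = {ω | n * ε / 3 ≤ |(∑ g ∈ Finset.range n, Y n g) ω
            - (∫ ω, (∑ g ∈ Finset.range n, Y n g) ω ∂(ℙ : Measure Ω))|} := by
      ext ω; simp only [Set.mem_setOf_eq, Finset.sum_apply, hES]
    rw [hset]
    refine h.trans (ENNReal.ofReal_le_ofReal ?_)
    have key : 18 * lam ^ 2 ≤ n * (r * ε ^ 2) := by
      rw [div_le_iff₀ (by positivity)] at hnN₀
      linarith
    calc variance (∑ g ∈ Finset.range n, Y n g) ℙ / (n * ε / 3) ^ 2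
        ≤ (n * lam ^ 2) / (n * ε / 3) ^ 2 := by gcongr
      _ ≤ r / 2 := by
          rw [div_le_iff₀ (by positivity)]
          nlinarith [mul_le_mul_of_nonneg_left key hnpos.le, sq_nonneg lam]
  -- Markov bound for the truncation error
  have hMark : ℙ {ω | n * ε / 3 ≤ ∑ g ∈ Finset.range n, |X n g ω - Y n g ω|}
      ≤ ENNReal.ofReal (r / 2) := by
    set Z : Ω → ℝ := fun ω => ∑ g ∈ Finset.range n, |X n g ω - Y n g ω| with hZdef
    have hZint : Integrable Z ℙ :=
      integrable_finset_sum _ (fun g _ => ((hXint n g).sub (hYint n g)).abs)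
    have hZnn : 0 ≤ᵐ[(ℙ : Measure Ω)] Z :=
      ae_of_all _ fun ω => Finset.sum_nonneg fun g _ => abs_nonneg _
    have hZI : (∫ ω, Z ω ∂(ℙ : Measure Ω)) = n * I n := by
      simp only [hZdef]
      rw [integral_finset_sum (Finset.range n) (f := fun g ω => |X n g ω - Y n g ω|)
        (fun g _ => ((hXint n g).sub (hYint n g)).abs)]
      rw [Finset.sum_congr rfl fun g _ => hIg n g, Finset.sum_const, Finset.card_range,
        nsmul_eq_mul]
    have hmark := mul_meas_ge_le_integral_of_nonneg hZnn hZint (n * ε / 3)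
    rw [hZI] at hmark
    have htR : (ℙ {x | n * ε / 3 ≤ Z x}).toReal ≤ r / 2 := by
      have h1 : (ℙ {x | n * ε / 3 ≤ Z x}).toReal ≤ n * I n / (n * ε / 3) := by
        rw [le_div_iff₀ hc]
        rw [measureReal_def] at hmark
        linarith [hmark]
      refine h1.trans ?_
      have hIε : I n ≤ r * ε / 6 := (hIle n).trans (min_le_right _ _)
      have hInn : 0 ≤ I n := by
        rw [hIdef]
        exact integral_nonneg fun ω => abs_nonneg _
      rw [div_le_iff₀ hc]
      nlinarith [mul_le_mul_of_nonneg_left hIε hnpos.le]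
    exact (ENNReal.le_ofReal_iff_toReal_le (measure_ne_top _ _) (by positivity)).mpr htR
  -- event inclusion
  have hsub : {ω | ε < |(n : ℝ)⁻¹ * ∑ g ∈ Finset.range n, X n g ω - μ n|}
      ⊆ {ω | n * ε / 3 ≤ |∑ g ∈ Finset.range n, Y n g ω - n * ν n|}
        ∪ {ω | n * ε / 3 ≤ ∑ g ∈ Finset.range n, |X n g ω - Y n g ω|} := by
    intro ω hω
    simp only [Set.mem_setOf_eq] at hω
    rw [Set.mem_union]
    by_contra hcon
    push_neg at hcon
    obtain ⟨hB, hC⟩ := hcon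
    simp only [Set.mem_setOf_eq, not_le] at hB hC
    have hXY : |∑ g ∈ Finset.range n, X n g ω - ∑ g ∈ Finset.range n, Y n g ω|
        ≤ ∑ g ∈ Finset.range n, |X n g ω - Y n g ω| := by
      rw [← Finset.sum_sub_distrib]
      exact Finset.abs_sum_le_sum_abs _ _
    have hμν : |μ n - ν n| ≤ ε / 6 := (hνμ n).trans ((hIle n).trans (min_le_left _ _))
    have hbig : (n : ℝ) * ε < |∑ g ∈ Finset.range n, X n g ω - n * μ n| := by
      have heq : (n : ℝ)⁻¹ * ∑ g ∈ Finset.range n, X n g ω - μ n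
          = (n : ℝ)⁻¹ * (∑ g ∈ Finset.range n, X n g ω - n * μ n) := by
        field_simp
      rw [heq, abs_mul, abs_inv, abs_of_pos hnpos] at hω
      rw [lt_inv_mul_iff₀ hnpos] at hω
      linarith
    have htri : |∑ g ∈ Finset.range n, X n g ω - n * μ n|
        ≤ |∑ g ∈ Finset.range n, X n g ω - ∑ g ∈ Finset.range n, Y n g ω|
          + |∑ g ∈ Finset.range n, Y n g ω - n * ν n| + n * |μ n - ν n| := by
      have hsp : ∑ g ∈ Finset.range n, X n g ω - n * μ n
          = (∑ g ∈ Finset.range n, X n g ω - ∑ g ∈ Finset.range n, Y n g ω)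
            + (∑ g ∈ Finset.range n, Y n g ω - n * ν n) + n * (ν n - μ n) := by ring
      rw [hsp]
      have h1 := abs_add_le ((∑ g ∈ Finset.range n, X n g ω
        - ∑ g ∈ Finset.range n, Y n g ω) + (∑ g ∈ Finset.range n, Y n g ω - n * ν n))
        ((n : ℝ) * (ν n - μ n))
      have h2 := abs_add_le (∑ g ∈ Finset.range n, X n g ω
        - ∑ g ∈ Finset.range n, Y n g ω) (∑ g ∈ Finset.range n, Y n g ω - n * ν n)
      have h3 : |(n : ℝ) * (ν n - μ n)| = n * |μ n - ν n| := by
        rw [abs_mul, abs_of_pos hnpos, abs_sub_comm]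
      linarith
    nlinarith [mul_le_mul_of_nonneg_left hμν hnpos.le]
  -- assemble
  calc ℙ {ω | ε < |(n : ℝ)⁻¹ * ∑ g ∈ Finset.range n, X n g ω - μ n|}
      ≤ ℙ ({ω | n * ε / 3 ≤ |∑ g ∈ Finset.range n, Y n g ω - n * ν n|}
        ∪ {ω | n * ε / 3 ≤ ∑ g ∈ Finset.range n, |X n g ω - Y n g ω|}) :=
        measure_mono hsub
    _ ≤ ℙ {ω | n * ε / 3 ≤ |∑ g ∈ Finset.range n, Y n g ω - n * ν n|}
        + ℙ {ω | n * ε / 3 ≤ ∑ g ∈ Finset.range n, |X n g ω - Y n g ω|} :=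
        measure_union_le _ _
    _ ≤ ENNReal.ofReal (r / 2) + ENNReal.ofReal (r / 2) := add_le_add hCheb hMark
    _ = ENNReal.ofReal r := by
        rw [← ENNReal.ofReal_add (by positivity) (by positivity)]; norm_num
    _ ≤ δ := hr2.le
end
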